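/- arXiv:2203.16872 — 8 statements merged into one kernel-verified Lean document; each statement's English description precedes it below -/
import Mathlib

section
/- Let φ be a profile over a finite set N of individuals such that the set of CSR socially qualified individuals f^CSR(φ, N) is nonempty, and let a ∈ N be an individual qualified by all individuals in N (i.e., φ(b, a) = 1 for all b ∈ N). Then for every a' ∈ N with a' ≠ a, a' ∈ f^CSR(φ, N) if and only if there is a directed path from a to a' in the incidence digraph G_φ (the digraph on vertex set N with an arc from x to y iff φ(x, y) = 1). -/
open Finset

def csrStep {α : Type*} [DecidableEq α] (φ : α → α → Bool) (W K : Finset α) : Finset α :=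
  K ∪ W.filter (fun a => ∃ a' ∈ K, φ a' a = true)

def csrIter {α : Type*} [DecidableEq α] (φ : α → α → Bool) (W : Finset α) : ℕ → Finset α
  | 0 => W.filter (fun a => ∀ a' ∈ W, φ a' a = true)
  | n + 1 => csrStep φ W (csrIter φ W n)

/-- The consensus-start-respecting rule. -/
def fCSR {α : Type*} [DecidableEq α] (φ : α → α → Bool) (W : Finset α) : Finset α :=
  csrIter φ W W.card

def lsrIter {α : Type*} [DecidableEq α] (φ : α → α → Bool) (W : Finset α) : ℕ → Finset α
  | 0 => W.filter (fun a => φ a a = true)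
  | n + 1 => csrStep φ W (lsrIter φ W n)

/-- The liberal-start-respecting rule. -/
def fLSR {α : Type*} [DecidableEq α] (φ : α → α → Bool) (W : Finset α) : Finset α :=
  lsrIter φ W W.card

section Aux

variable {α : Type*} [DecidableEq α] (φ : α → α → Bool) (W : Finset α)

lemma csrIter_subset_succ (n : ℕ) : csrIter φ W n ⊆ csrIter φ W (n + 1) :=
  Finset.subset_union_left

lemma csrIter_mono {n m : ℕ} (h : n ≤ m) : csrIter φ W n ⊆ csrIter φ W m := by
  induction m with
  | zero => simpa [Nat.le_zero.mp h]
  | succ m ih =>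
    rcases Nat.lt_or_ge n (m + 1) with h' | h'
    · exact (ih (Nat.lt_succ_iff.mp h')).trans (csrIter_subset_succ φ W m)
    · have : n = m + 1 := le_antisymm h h'
      subst this; exact subset_rfl

lemma csrIter_subset_W (n : ℕ) : csrIter φ W n ⊆ W := by
  induction n with
  | zero => exact Finset.filter_subset _ _
  | succ n ih =>
    intro x hx
    rcases Finset.mem_union.mp hx with hx | hx
    · exact ih hx
    · exact (Finset.mem_filter.mp hx).1

lemma csrIter_stab {n : ℕ} (h : csrIter φ W n = csrIter φ W (n + 1)) :
    ∀ k, csrIter φ W (n + k) = csrIter φ W n := by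
  intro k
  induction k with
  | zero => rfl
  | succ k ih =>
    have : csrIter φ W (n + k + 1) = csrStep φ W (csrIter φ W (n + k)) := rfl
    rw [show n + (k+1) = n + k + 1 from rfl, this, ih]
    exact h.symm

end Aux

theorem csr_reachability_characterization
    {α : Type*} [DecidableEq α] [Fintype α] (φ : α → α → Bool) (a : α)
    (hne : (fCSR φ (Finset.univ : Finset α)).Nonempty)
    (ha : ∀ b : α, φ b a = true)
    (a' : α) (hne' : a' ≠ a) :
    a' ∈ fCSR φ (Finset.univ : Finset α) ↔
      Relation.ReflTransGen (fun x y => φ x y = true) a a' := by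
  classical
  set W : Finset α := Finset.univ with hW
  set N := W.card with hN
  have ha0 : a ∈ csrIter φ W 0 := by
    simp [csrIter, ha, hW]
  -- the iteration is fixed at step N
  have hfix : csrIter φ W (N + 1) = csrIter φ W N := by
    by_contra hne2
    have hgrow : ∀ n ≤ N, n + 1 ≤ (csrIter φ W n).card := by
      intro n hn
      induction n with
      | zero => exact Finset.card_pos.mpr ⟨a, ha0⟩
      | succ n ih =>
        have hlt : csrIter φ W n ⊂ csrIter φ W (n + 1) := by
          refine Finset.ssubset_iff_subset_ne.mpr ⟨csrIter_subset_succ φ W n, ?_⟩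
          intro heq
          have h2 := csrIter_stab φ W heq (N + 1 - n)
          have h3 := csrIter_stab φ W heq (N - n)
          rw [Nat.add_sub_cancel' (by omega : n ≤ N + 1)] at h2
          rw [Nat.add_sub_cancel' (by omega : n ≤ N)] at h3
          exact hne2 (h2.trans h3.symm)
        have h4 := Finset.card_lt_card hlt
        have h5 := ih (by omega)
        omega
    have h6 := hgrow N le_rfl
    have hle : (csrIter φ W N).card ≤ N := Finset.card_le_card (csrIter_subset_W φ W N)
    omega
  have hstep : ∀ x y, x ∈ fCSR φ W → φ x y = true → y ∈ fCSR φ W := by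
    intro x y hx hxy
    have : y ∈ csrStep φ W (csrIter φ W N) := by
      refine Finset.mem_union_right _ (Finset.mem_filter.mpr ⟨Finset.mem_univ y, ⟨x, hx, hxy⟩⟩)
    rwa [show csrStep φ W (csrIter φ W N) = csrIter φ W (N + 1) from rfl, hfix] at this
  constructor
  · intro h
    -- forward: everything in csrIter is reachable from a
    have key : ∀ n, ∀ x ∈ csrIter φ W n, Relation.ReflTransGen (fun x y => φ x y = true) a x := by
      intro n
      induction n with
      | zero =>
        intro x hx
        simp only [csrIter, hW, Finset.mem_filter, Finset.mem_univ, true_implies] at hx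
        exact Relation.ReflTransGen.single (hx.2 a)
      | succ n ih =>
        intro x hx
        rcases Finset.mem_union.mp hx with hx | hx
        · exact ih x hx
        · obtain ⟨x', hx', hφ⟩ := (Finset.mem_filter.mp hx).2
          exact (ih x' hx').tail hφ
    exact key N a' h
  · intro h
    clear hne'
    induction h with
    | refl => exact csrIter_mono φ W (Nat.zero_le N) ha0
    | tail _ hφ ih => exact hstep _ _ ih hφ
end

section
/- Let φ be a profile over a finite set N which is qualifying consecutive (QC) with respect to a linear order ▷ on N. Then all individuals in f^CSR(φ, N) are consecutive in the order ▷; that is, f^CSR(φ, N) forms an interval with respect to ▷. -/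
open Finset

theorem csr_interval_of_qc
    {α : Type*} [LinearOrder α] [Fintype α] (φ : α → α → Bool)
    (hqc : ∀ a x y w : α, x ≤ w → w ≤ y → φ a x = true → φ a y = true → φ a w = true) :
    ∀ x y w : α, x ≤ w → w ≤ y →
      x ∈ fCSR φ (Finset.univ : Finset α) → y ∈ fCSR φ (Finset.univ : Finset α) →
      w ∈ fCSR φ (Finset.univ : Finset α) := by
  classical
  by_cases hne : (csrIter φ (Finset.univ : Finset α) 0).Nonempty
  · obtain ⟨c, hc⟩ := hne
    have hcq : ∀ a, φ a c = true := by
      intro a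
      simp only [csrIter, mem_filter] at hc
      exact hc.2 a (mem_univ a)
    have main : ∀ n, (∀ x y w : α, x ≤ w → w ≤ y →
        x ∈ csrIter φ (Finset.univ : Finset α) n →
        y ∈ csrIter φ (Finset.univ : Finset α) n →
        w ∈ csrIter φ (Finset.univ : Finset α) n) ∧
        c ∈ csrIter φ (Finset.univ : Finset α) n := by
      intro n
      induction n with
      | zero =>
        refine ⟨?_, hc⟩
        intro x y w hxw hwy hx hy
        simp only [csrIter, mem_filter] at hx hy ⊢
        exact ⟨mem_univ _, fun a _ =>
          hqc a x y w hxw hwy (hx.2 a (mem_univ a)) (hy.2 a (mem_univ a))⟩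
      | succ n ih =>
        obtain ⟨ihconv, ihc⟩ := ih
        constructor
        · intro x y w hxw hwy hx hy
          simp only [csrIter, csrStep, mem_union, mem_filter] at hx hy ⊢
          rcases le_total w c with hwc | hcw
          · rcases hx with hxK | ⟨-, a, haK, hax⟩
            · exact Or.inl (ihconv x c w hxw hwc hxK ihc)
            · exact Or.inr ⟨mem_univ _, a, haK, hqc a x c w hxw hwc hax (hcq a)⟩
          · rcases hy with hyK | ⟨-, a, haK, hay⟩
            · exact Or.inl (ihconv c y w hcw hwy ihc hyK)
            · exact Or.inr ⟨mem_univ _, a, haK, hqc a c y w hcw hwy (hcq a) hay⟩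
        · simp only [csrIter, csrStep, mem_union]
          exact Or.inl ihc
    intro x y w hxw hwy hx hy
    exact (main _).1 x y w hxw hwy hx hy
  · have hempty : ∀ n, csrIter φ (Finset.univ : Finset α) n = ∅ := by
      intro n
      induction n with
      | zero => exact Finset.not_nonempty_iff_eq_empty.mp hne
      | succ n ih =>
        simp [csrIter, csrStep, ih]
    intro x y w _ _ hx _
    rw [fCSR, hempty] at hx
    exact absurd hx (Finset.notMem_empty x)
end

section
/- Let φ be a profile over a finite set N, and let a, a' be two distinct individuals in a set S ⊆ T ⊆ N such that φ(a, a') = 1. Then for any set U ⊆ N \ T: S ⊆ f^CSR(φ, T ∪ U) if and only if (S \ {a'}) ⊆ f^CSR(φ, T ∪ U). (Correctness of the reduction rule that moves a' from S to T \ S.) -/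
open Finset

lemma csrIter_mono_s4 {α : Type*} [DecidableEq α] (φ : α → α → Bool) (W : Finset α) (n : ℕ) :
    csrIter φ W n ⊆ csrIter φ W (n + 1) := by
  simp only [csrIter, csrStep]
  exact subset_union_left

lemma csrIter_subset {α : Type*} [DecidableEq α] (φ : α → α → Bool) (W : Finset α) (n : ℕ) :
    csrIter φ W n ⊆ W := by
  induction n with
  | zero => exact filter_subset _ _
  | succ n ih =>
    simp only [csrIter, csrStep]
    exact union_subset ih (filter_subset _ _)

lemma csrIter_stab_s4 {α : Type*} [DecidableEq α] (φ : α → α → Bool) (W : Finset α) (n : ℕ)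
    (hn : csrIter φ W n = csrIter φ W (n + 1)) :
    ∀ m, n ≤ m → csrIter φ W m = csrIter φ W (m + 1) := by
  intro m hm
  induction m with
  | zero => exact (Nat.le_zero.mp hm) ▸ hn
  | succ m ih =>
    rcases Nat.lt_or_ge n (m + 1) with h | h
    · have := ih (by omega)
      show csrIter φ W (m + 1) = csrStep φ W (csrIter φ W (m + 1))
      rw [← this]
      exact this
    · have : n = m + 1 := le_antisymm hm h
      exact this ▸ hn

lemma csrIter_fixed {α : Type*} [DecidableEq α] (φ : α → α → Bool) (W : Finset α) :
    csrIter φ W W.card = csrIter φ W (W.card + 1) := by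
  have key : ∀ n : ℕ, (∃ m < n, csrIter φ W m = csrIter φ W (m + 1)) ∨
      n ≤ (csrIter φ W n).card := by
    intro n
    induction n with
    | zero => right; omega
    | succ n ih =>
      rcases ih with ⟨m, hm, he⟩ | hc
      · exact Or.inl ⟨m, by omega, he⟩
      · by_cases he : csrIter φ W n = csrIter φ W (n + 1)
        · exact Or.inl ⟨n, by omega, he⟩
        · right
          have hss : csrIter φ W n ⊂ csrIter φ W (n + 1) :=
            Finset.ssubset_iff_subset_ne.mpr ⟨csrIter_mono_s4 φ W n, he⟩
          have := Finset.card_lt_card hss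
          omega
  rcases key W.card with ⟨m, hm, he⟩ | hc
  · exact csrIter_stab_s4 φ W m he W.card (by omega)
  · have heq : csrIter φ W W.card = W :=
      Finset.eq_of_subset_of_card_le (csrIter_subset φ W _) hc
    have : csrIter φ W (W.card + 1) ⊆ csrIter φ W W.card := by
      rw [heq]; exact csrIter_subset φ W _
    exact le_antisymm (csrIter_mono_s4 φ W _) this

theorem csr_reduction_rule_correct
    {α : Type*} [DecidableEq α] (φ : α → α → Bool)
    (S T : Finset α) (hST : S ⊆ T) (a a' : α)
    (haS : a ∈ S) (ha'S : a' ∈ S) (hne : a ≠ a') (hq : φ a a' = true)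
    (U : Finset α) (hU : Disjoint U T) :
    S ⊆ fCSR φ (T ∪ U) ↔ (S \ {a'}) ⊆ fCSR φ (T ∪ U) := by
  constructor
  · intro h
    exact (sdiff_subset).trans h
  · intro h
    have ha : a ∈ fCSR φ (T ∪ U) := h (by simp [haS, hne])
    have ha'W : a' ∈ T ∪ U := mem_union_left _ (hST ha'S)
    have hstep : a' ∈ csrStep φ (T ∪ U) (fCSR φ (T ∪ U)) := by
      apply mem_union_right
      simp only [mem_filter]
      exact ⟨ha'W, a, ha, hq⟩
    have ha' : a' ∈ fCSR φ (T ∪ U) := by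
      have := csrIter_fixed φ (T ∪ U)
      rw [fCSR]
      rw [show csrIter φ (T ∪ U) (T ∪ U).card = csrIter φ (T ∪ U) ((T ∪ U).card + 1) from this]
      exact hstep
    intro x hx
    by_cases hxa : x = a'
    · exact hxa ▸ ha'
    · exact h (by simp [hx, hxa])
end

section
/- Correctness of the RBDS-to-GCAI reduction for f^CSR: Let G = (R ∪ B, E) be a bipartite graph with parts R and B, both nonempty. Define a profile φ over N = R ∪ B by: every b ∈ B qualifies all individuals in R and disqualifies all individuals in B; every r ∈ R qualifies all individuals in R and qualifies b ∈ B iff r and b are adjacent in G. Then for any R' ⊆ R: B ⊆ f^CSR(φ, B ∪ R') if and only if every vertex in B has a neighbor in R' (i.e., R' dominates B). -/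
open Finset

theorem rbds_to_gcai_csr_correct
    {α : Type*} [DecidableEq α] (R B : Finset α) (adj : α → α → Prop)
    (hR : R.Nonempty) (hB : B.Nonempty) (hdisj : Disjoint R B)
    (φ : α → α → Bool)
    (h1 : ∀ x ∈ R ∪ B, ∀ r ∈ R, φ x r = true)
    (h2 : ∀ b ∈ B, ∀ b' ∈ B, φ b b' = false)
    (h3 : ∀ r ∈ R, ∀ b ∈ B, (φ r b = true ↔ adj r b)) :
    ∀ R' ⊆ R, (B ⊆ fCSR φ (B ∪ R') ↔ ∀ b ∈ B, ∃ r ∈ R', adj r b) := by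
  intro R' hR'
  classical
  set W := B ∪ R' with hW
  have hWsub : W ⊆ R ∪ B := by
    intro x hx; rcases mem_union.1 hx with h | h
    · exact mem_union_right _ h
    · exact mem_union_left _ (hR' h)
  have h0 : csrIter φ W 0 = R' := by
    ext a
    simp only [csrIter, mem_filter]
    constructor
    · rintro ⟨ha, hq⟩
      rcases mem_union.1 ha with hb | hr
      · obtain ⟨b0, hb0⟩ := hB
        have := hq b0 (mem_union_left _ hb0)
        rw [h2 b0 hb0 a hb] at this; exact absurd this (by simp)
      · exact hr
    · intro hr
      refine ⟨mem_union_right _ hr, fun x hx => h1 x (hWsub hx) a (hR' hr)⟩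
  have hstep : ∀ K, R' ⊆ K → K ⊆ (R' ∪ B.filter (fun b => ∃ r ∈ R', φ r b = true)) → csrStep φ W K = (R' ∪ B.filter (fun b => ∃ r ∈ R', φ r b = true)) := by
    intro K hRK hKS
    ext a
    simp only [csrStep, mem_union, mem_filter]
    constructor
    · rintro (h | ⟨haW, a', ha'K, hφ⟩)
      · rcases mem_union.1 (hKS h) with h' | h'
        · exact Or.inl h'
        · exact Or.inr (mem_filter.1 h')
      · rcases mem_union.1 haW with hb | hr
        · rcases mem_union.1 (hKS ha'K) with hr' | hb'
          · exact Or.inr ⟨hb, a', hr', hφ⟩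
          · have := h2 a' (mem_filter.1 hb').1 a hb
            rw [this] at hφ; exact absurd hφ (by simp)
        · exact Or.inl hr
    · rintro (hr | ⟨hbB, r, hrR', hφ⟩)
      · exact Or.inl (hRK hr)
      · exact Or.inr ⟨mem_union_left _ hbB, r, hRK hrR', hφ⟩
  have hiter : ∀ n, csrIter φ W (n+1) = (R' ∪ B.filter (fun b => ∃ r ∈ R', φ r b = true)) := by
    intro n
    induction n with
    | zero =>
        rw [show csrIter φ W 1 = csrStep φ W (csrIter φ W 0) from rfl, h0]
        exact hstep R' (subset_refl _) subset_union_left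
    | succ n ih =>
        rw [show csrIter φ W (n+2) = csrStep φ W (csrIter φ W (n+1)) from rfl, ih]
        exact hstep _ subset_union_left (subset_refl _)
  have hcard : W.card ≠ 0 := by
    obtain ⟨b0, hb0⟩ := hB
    exact card_ne_zero_of_mem (mem_union_left _ hb0)
  obtain ⟨m, hm⟩ := Nat.exists_eq_succ_of_ne_zero hcard
  have hf : fCSR φ W = (R' ∪ B.filter (fun b => ∃ r ∈ R', φ r b = true)) := by rw [fCSR, hm, hiter]
  rw [hf]
  constructor
  · intro hBS b hb
    rcases mem_union.1 (hBS hb) with hr | hbf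
    · exact absurd hb (disjoint_left.1 hdisj (hR' hr))
    · obtain ⟨_, r, hrR', hφ⟩ := mem_filter.1 hbf
      exact ⟨r, hrR', (h3 r (hR' hrR') b hb).1 hφ⟩
  · intro h b hb
    obtain ⟨r, hrR', hadj⟩ := h b hb
    exact mem_union_right _ (mem_filter.2 ⟨hb, r, hrR', (h3 r (hR' hrR') b hb).2 hadj⟩)
end

section
/- Correctness of the RBDS-to-GCAI reduction for f^LSR: Let G = (R ∪ B, E) be a bipartite graph. For each r ∈ R of degree d(r), create individuals r(0), r(1), …, r(d(r)). Define N = B ∪ {r(i) : r ∈ R, 0 ≤ i ≤ d(r)}, T = B ∪ {r(i) : r ∈ R, 1 ≤ i ≤ d(r)}, and profile φ: r(0) qualifies r(0), r(1), …, r(d(r)); the individuals r(1), …, r(d(r)) each qualify exactly one neighbor of r in G so that each neighbor of r is qualified by exactly one of them; all other qualifications are 0. Then for any U ⊆ N \ T: B ⊆ f^LSR(φ, T ∪ U) if and only if the set R' = {r ∈ R : r(0) ∈ U} dominates B in G. -/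
open Finset

lemma lsrIter_mono {α : Type*} [DecidableEq α] (φ : α → α → Bool) (W : Finset α)
    {m n : ℕ} (h : m ≤ n) : lsrIter φ W m ⊆ lsrIter φ W n := by
  induction n with
  | zero => simp_all
  | succ k ih =>
    rcases Nat.lt_or_ge m (k+1) with h' | h'
    · exact (ih (Nat.lt_succ_iff.mp h')).trans
        (by simp [lsrIter, csrStep, Finset.subset_union_left])
    · have : m = k + 1 := le_antisymm h h'
      subst this; rfl

theorem rbds_to_gcai_lsr_correct
    {V α : Type*} [DecidableEq V] [DecidableEq α]
    (R B : Finset V) (adj : V → V → Prop)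
    (ι : V → α) (z : V → α) (C : V → Finset α)
    (φ : α → α → Bool)
    (hι : ∀ b ∈ B, ∀ b' ∈ B, ι b = ι b' → b = b')
    (hz : ∀ r ∈ R, ∀ r' ∈ R, z r = z r' → r = r')
    (hzT : ∀ r ∈ R, z r ∉ B.image ι ∪ R.biUnion C)
    (hCdisj : ∀ r ∈ R, ∀ r' ∈ R, r ≠ r' → Disjoint (C r) (C r'))
    (hCι : ∀ r ∈ R, ∀ b ∈ B, ι b ∉ C r)
    (hφz : ∀ r ∈ R, ∀ x : α, (φ (z r) x = true ↔ x = z r ∨ x ∈ C r))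
    (hφc : ∀ r ∈ R, ∀ c ∈ C r, ∃ b ∈ B, adj r b ∧ ∀ x : α, (φ c x = true ↔ x = ι b))
    (hφbc : ∀ r ∈ R, ∀ b ∈ B, adj r b → ∃! c, c ∈ C r ∧ φ c (ι b) = true)
    (hφB : ∀ b ∈ B, ∀ x : α, φ (ι b) x = false) :
    ∀ U ⊆ R.image z,
      (B.image ι ⊆ fLSR φ ((B.image ι ∪ R.biUnion C) ∪ U) ↔
        ∀ b ∈ B, ∃ r ∈ R, adj r b ∧ z r ∈ U) := by
  intro U hU
  set W := (B.image ι ∪ R.biUnion C) ∪ U with hW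
  set P : α → Prop := fun a => a ∈ U ∨ (∃ r ∈ R, z r ∈ U ∧ a ∈ C r) ∨
    (∃ b ∈ B, a = ι b ∧ ∃ r ∈ R, adj r b ∧ z r ∈ U) with hP
  have key : ∀ n, ∀ a ∈ lsrIter φ W n, P a := by
    intro n
    induction n with
    | zero =>
      intro a ha
      rw [lsrIter, Finset.mem_filter] at ha
      obtain ⟨haW, hself⟩ := ha
      rw [hW] at haW
      rcases Finset.mem_union.mp haW with haT | haU
      · rcases Finset.mem_union.mp haT with haB | haC
        · obtain ⟨b, hb, rfl⟩ := Finset.mem_image.mp haB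
          rw [hφB b hb] at hself; simp at hself
        · obtain ⟨r, hr, hc⟩ := Finset.mem_biUnion.mp haC
          obtain ⟨b, hb, _, hco⟩ := hφc r hr a hc
          have := (hco a).mp hself
          exact absurd (this ▸ hc) (hCι r hr b hb)
      · exact Or.inl haU
    | succ k ih =>
      intro a ha
      rw [lsrIter, csrStep, Finset.mem_union] at ha
      rcases ha with ha | ha
      · exact ih a ha
      · rw [Finset.mem_filter] at ha
        obtain ⟨haW, a', ha', hq⟩ := ha
        rcases ih a' ha' with h1 | h2 | h3
        · obtain ⟨r, hr, rfl⟩ := Finset.mem_image.mp (hU h1)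
          rcases (hφz r hr a).mp hq with rfl | hac
          · exact Or.inl h1
          · exact Or.inr (Or.inl ⟨r, hr, h1, hac⟩)
        · obtain ⟨r, hr, hzU, hc⟩ := h2
          obtain ⟨b, hb, hadj, hco⟩ := hφc r hr a' hc
          exact Or.inr (Or.inr ⟨b, hb, (hco a).mp hq, r, hr, hadj, hzU⟩)
        · obtain ⟨b, hb, rfl, _⟩ := h3
          rw [hφB b hb] at hq; simp at hq
  constructor
  · intro hsub b hb
    have hmem : ι b ∈ fLSR φ W := hsub (Finset.mem_image_of_mem ι hb)
    rcases key W.card (ι b) hmem with h1 | h2 | h3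
    · obtain ⟨r, hr, hzr⟩ := Finset.mem_image.mp (hU h1)
      exact absurd (Finset.mem_union.mpr (Or.inl
        (Finset.mem_image_of_mem ι hb))) (hzr ▸ hzT r hr)
    · obtain ⟨r, hr, _, hc⟩ := h2
      exact absurd hc (hCι r hr b hb)
    · obtain ⟨b', hb', heq, r, hr, hadj, hzU⟩ := h3
      exact ⟨r, hr, (hι b hb b' hb' heq) ▸ hadj, hzU⟩
  · intro h x hx
    obtain ⟨b, hb, rfl⟩ := Finset.mem_image.mp hx
    obtain ⟨r, hr, hadj, hzU⟩ := h b hb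
    obtain ⟨c, ⟨hcC, hcφ⟩, _⟩ := hφbc r hr b hb hadj
    have hzW : z r ∈ W := Finset.mem_union.mpr (Or.inr hzU)
    have hιW : ι b ∈ W := Finset.mem_union.mpr (Or.inl
      (Finset.mem_union.mpr (Or.inl (Finset.mem_image_of_mem ι hb))))
    have hcW : c ∈ W := Finset.mem_union.mpr (Or.inl
      (Finset.mem_union.mpr (Or.inr (Finset.mem_biUnion.mpr ⟨r, hr, hcC⟩))))
    have h0 : z r ∈ lsrIter φ W 0 := by
      rw [lsrIter, Finset.mem_filter]
      exact ⟨hzW, (hφz r hr (z r)).mpr (Or.inl rfl)⟩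
    have h1 : c ∈ lsrIter φ W 1 := by
      rw [lsrIter, csrStep, Finset.mem_union, Finset.mem_filter]
      exact Or.inr ⟨hcW, z r, h0, (hφz r hr c).mpr (Or.inr hcC)⟩
    have h2 : ι b ∈ lsrIter φ W 2 := by
      rw [lsrIter, csrStep, Finset.mem_union, Finset.mem_filter]
      exact Or.inr ⟨hιW, c, h1, hcφ⟩
    have hne : z r ≠ ι b := by
      intro he
      exact hzT r hr (Finset.mem_union.mpr (Or.inl
        (he ▸ Finset.mem_image_of_mem ι hb)))
    have hcard : 2 ≤ W.card := by
      have hsub : ({z r, ι b} : Finset α) ⊆ W := by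
        intro x hx
        rcases Finset.mem_insert.mp hx with rfl | hx
        · exact hzW
        · exact (Finset.mem_singleton.mp hx) ▸ hιW
      calc 2 = ({z r, ι b} : Finset α).card := (Finset.card_pair hne).symm
        _ ≤ W.card := Finset.card_le_card hsub
    exact lsrIter_mono φ W hcard h2
end

section
/- Equivalence of the DVWST-to-DST reduction: Let G be a digraph, X ⊆ V(G) a set of terminals, u ∈ V(G) \ X a root, w : V(G) → ℕ a vertex weight function, and p ∈ ℕ. Construct the digraph G' by replacing each vertex v ∈ V(G) \ (X ∪ {u}) by two vertices v_in, v_out with an arc (v_in, v_out) of weight w(v), where the in-neighbors of v_in are the in-neighbors of v in G and the out-neighbors of v_out are the out-neighbors of v in G, and all other arcs have weight 0. Then there exists J ⊆ V(G) \ (X ∪ {u}) with Σ_{v∈J} w(v) ≤ p such that in the subgraph of G induced by J ∪ X ∪ {u} every terminal x ∈ X is reachable from u, if and only if there exists a set J' of arcs of G' with total weight at most p such that every terminal x ∈ X is reachable from u in the subgraph of G' formed by the arcs of J'. -/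
open Finset

/-- The arc relation of the digraph G' obtained from G (with arc relation E)
by splitting each vertex v ∉ X ∪ {u} into v_in = Sum.inl v and v_out = Sum.inr v;
vertices in X ∪ {u} are kept as Sum.inl v. -/
def splitArc {V : Type*} [DecidableEq V] (E : V → V → Prop) (X : Finset V) (u : V) :
    (V ⊕ V) → (V ⊕ V) → Prop := fun p q =>
  (∃ a b : V, E a b ∧
      p = (if a ∈ X ∨ a = u then Sum.inl a else Sum.inr a) ∧ q = Sum.inl b) ∨
  (∃ v : V, ¬(v ∈ X ∨ v = u) ∧ p = Sum.inl v ∧ q = Sum.inr v)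

/-- The arc weights of G': the arc (v_in, v_out) of a split vertex v has weight w(v),
all other arcs have weight 0. -/
def splitWeight {V : Type*} [DecidableEq V] (X : Finset V) (u : V) (w : V → ℕ) :
    (V ⊕ V) → (V ⊕ V) → ℕ
  | Sum.inl a, Sum.inr b => if a = b ∧ ¬(a ∈ X ∨ a = u) then w a else 0
  | _, _ => 0

theorem dvwst_to_dst_correct
    {V : Type*} [DecidableEq V] [Fintype V]
    (E : V → V → Prop) (X : Finset V) (u : V) (hu : u ∉ X)
    (w : V → ℕ) (p : ℕ) :
    (∃ J : Finset V, (∀ v ∈ J, v ∉ X ∧ v ≠ u) ∧ (∑ v ∈ J, w v) ≤ p ∧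
        ∀ x ∈ X, Relation.ReflTransGen
          (fun a b => (a ∈ J ∨ a ∈ X ∨ a = u) ∧ (b ∈ J ∨ b ∈ X ∨ b = u) ∧ E a b) u x)
    ↔
    (∃ J' : Finset ((V ⊕ V) × (V ⊕ V)),
        (∀ e ∈ J', splitArc E X u e.1 e.2) ∧
        (∑ e ∈ J', splitWeight X u w e.1 e.2) ≤ p ∧
        ∀ x ∈ X, Relation.ReflTransGen
          (fun a b => (a, b) ∈ J') (Sum.inl u) (Sum.inl x)) := by
  classical
  constructor
  · -- forward direction
    rintro ⟨J, hJ, hw, hreach⟩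
    set P : (V ⊕ V) × (V ⊕ V) → Prop := fun e =>
      (∃ a b : V, (a ∈ J ∨ a ∈ X ∨ a = u) ∧ (b ∈ J ∨ b ∈ X ∨ b = u) ∧ E a b ∧
        e = ((if a ∈ X ∨ a = u then Sum.inl a else Sum.inr a), Sum.inl b)) ∨
      (∃ v ∈ J, e = (Sum.inl v, Sum.inr v)) with hP
    refine ⟨Finset.univ.filter P, ?_, ?_, ?_⟩
    · -- every arc of J' is an arc of G'
      intro e he
      rw [Finset.mem_filter] at he
      rcases he.2 with ⟨a, b, _, _, hE, rfl⟩ | ⟨v, hv, rfl⟩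
      · exact Or.inl ⟨a, b, hE, rfl, rfl⟩
      · exact Or.inr ⟨v, fun h => h.elim (hJ v hv).1 (hJ v hv).2, rfl, rfl⟩
    · -- weight bound
      have hsub : J.image (fun v => ((Sum.inl v : V ⊕ V), (Sum.inr v : V ⊕ V)))
          ⊆ Finset.univ.filter P := by
        intro e he
        rw [Finset.mem_image] at he
        obtain ⟨v, hv, rfl⟩ := he
        rw [Finset.mem_filter]
        exact ⟨Finset.mem_univ _, Or.inr ⟨v, hv, rfl⟩⟩
      have hzero : ∀ e ∈ Finset.univ.filter P,
          e ∉ J.image (fun v => ((Sum.inl v : V ⊕ V), (Sum.inr v : V ⊕ V))) →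
          splitWeight X u w e.1 e.2 = 0 := by
        intro e he hne
        rw [Finset.mem_filter] at he
        rcases he.2 with ⟨a, b, _, _, _, rfl⟩ | ⟨v, hv, rfl⟩
        · by_cases hka : a ∈ X ∨ a = u
          · rw [if_pos hka]; rfl
          · rw [if_neg hka]; rfl
        · exact absurd (Finset.mem_image_of_mem _ hv) hne
      calc ∑ e ∈ Finset.univ.filter P, splitWeight X u w e.1 e.2
          = ∑ e ∈ J.image (fun v => ((Sum.inl v : V ⊕ V), (Sum.inr v : V ⊕ V))),
              splitWeight X u w e.1 e.2 := (Finset.sum_subset hsub hzero).symm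
        _ = ∑ v ∈ J, splitWeight X u w (Sum.inl v) (Sum.inr v) := by
            rw [Finset.sum_image]
            intro a _ b _ h
            exact Sum.inl.inj (congrArg Prod.fst h)
        _ = ∑ v ∈ J, w v := by
            apply Finset.sum_congr rfl
            intro v hv
            show (if v = v ∧ ¬(v ∈ X ∨ v = u) then w v else 0) = w v
            rw [if_pos ⟨rfl, fun h => h.elim (hJ v hv).1 (hJ v hv).2⟩]
        _ ≤ p := hw
    · -- reachability
      intro x hx
      have h := hreach x hx
      clear hx
      induction h with
      | refl => exact Relation.ReflTransGen.refl
      | @tail b c hub hbc ih =>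
        obtain ⟨hbS, hcS, hE⟩ := hbc
        by_cases hkb : b ∈ X ∨ b = u
        · refine ih.tail ?_
          rw [Finset.mem_filter]
          refine ⟨Finset.mem_univ _, Or.inl ⟨b, c, hbS, hcS, hE, ?_⟩⟩
          rw [if_pos hkb]
        · have hbJ : b ∈ J := hbS.resolve_right hkb
          refine Relation.ReflTransGen.tail (b := Sum.inr b)
            (Relation.ReflTransGen.tail ih ?_) ?_
          · rw [Finset.mem_filter]
            exact ⟨Finset.mem_univ _, Or.inr ⟨b, hbJ, rfl⟩⟩
          · rw [Finset.mem_filter]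
            refine ⟨Finset.mem_univ _, Or.inl ⟨b, c, hbS, hcS, hE, ?_⟩⟩
            rw [if_neg hkb]
  · -- backward direction
    rintro ⟨J', harcs, hw, hreach⟩
    set J : Finset V := Finset.univ.filter
      (fun v => ¬(v ∈ X ∨ v = u) ∧ ((Sum.inl v : V ⊕ V), (Sum.inr v : V ⊕ V)) ∈ J') with hJdef
    have hJmem : ∀ v, v ∈ J ↔
        ¬(v ∈ X ∨ v = u) ∧ ((Sum.inl v : V ⊕ V), (Sum.inr v : V ⊕ V)) ∈ J' := by
      intro v; rw [hJdef, Finset.mem_filter]; simp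
    refine ⟨J, ?_, ?_, ?_⟩
    · intro v hv
      have := ((hJmem v).mp hv).1
      exact ⟨fun h => this (Or.inl h), fun h => this (Or.inr h)⟩
    · -- weight bound
      have hsub : J.image (fun v => ((Sum.inl v : V ⊕ V), (Sum.inr v : V ⊕ V))) ⊆ J' := by
        intro e he
        rw [Finset.mem_image] at he
        obtain ⟨v, hv, rfl⟩ := he
        exact ((hJmem v).mp hv).2
      calc ∑ v ∈ J, w v
          = ∑ v ∈ J, splitWeight X u w (Sum.inl v) (Sum.inr v) := by
            apply Finset.sum_congr rfl
            intro v hv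
            show w v = (if v = v ∧ ¬(v ∈ X ∨ v = u) then w v else 0)
            rw [if_pos ⟨rfl, ((hJmem v).mp hv).1⟩]
        _ = ∑ e ∈ J.image (fun v => ((Sum.inl v : V ⊕ V), (Sum.inr v : V ⊕ V))),
              splitWeight X u w e.1 e.2 := by
            rw [Finset.sum_image]
            intro a _ b _ h
            exact Sum.inl.inj (congrArg Prod.fst h)
        _ ≤ ∑ e ∈ J', splitWeight X u w e.1 e.2 := Finset.sum_le_sum_of_subset hsub
        _ ≤ p := hw
    · -- reachability
      intro x hx
      set R : V → V → Prop := fun a b =>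
        (a ∈ J ∨ a ∈ X ∨ a = u) ∧ (b ∈ J ∨ b ∈ X ∨ b = u) ∧ E a b with hR
      have main : ∀ z, Relation.ReflTransGen (fun a b => (a, b) ∈ J') (Sum.inl u) z →
          (∀ v, z = Sum.inl v →
            ((v ∈ X ∨ v = u) → Relation.ReflTransGen R u v) ∧
            (¬(v ∈ X ∨ v = u) → ∃ a, (a ∈ J ∨ a ∈ X ∨ a = u) ∧
              Relation.ReflTransGen R u a ∧ E a v)) ∧
          (∀ v, z = Sum.inr v → v ∈ J ∧ Relation.ReflTransGen R u v) := by
        intro z hz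
        induction hz with
        | refl =>
          constructor
          · intro v hv
            rw [Sum.inl.injEq] at hv
            subst hv
            exact ⟨fun _ => Relation.ReflTransGen.refl,
              fun h => absurd (Or.inr rfl) h⟩
          · intro v hv
            exact absurd hv (by simp)
        | @tail b c hub hbc ih =>
          have harc := harcs (b, c) hbc
          rcases harc with ⟨a, b', hE, hpeq, hqeq⟩ | ⟨v, hkv, hpeq, hqeq⟩
          · -- kept arc: c = inl b'
            subst hqeq
            by_cases hka : a ∈ X ∨ a = u
            · rw [if_pos hka] at hpeq
              subst hpeq
              have hra : Relation.ReflTransGen R u a := (ih.1 a rfl).1 hka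
              have haS : a ∈ J ∨ a ∈ X ∨ a = u := Or.inr hka
              constructor
              · intro v hv
                rw [Sum.inl.injEq] at hv
                subst hv
                exact ⟨fun hkb => hra.tail ⟨haS, Or.inr hkb, hE⟩,
                  fun _ => ⟨a, haS, hra, hE⟩⟩
              · intro v hv
                exact absurd hv (by simp)
            · rw [if_neg hka] at hpeq
              subst hpeq
              obtain ⟨haJ, hra⟩ := ih.2 a rfl
              have haS : a ∈ J ∨ a ∈ X ∨ a = u := Or.inl haJ
              constructor
              · intro v hv
                rw [Sum.inl.injEq] at hv
                subst hv
                exact ⟨fun hkb => hra.tail ⟨haS, Or.inr hkb, hE⟩,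
                  fun _ => ⟨a, haS, hra, hE⟩⟩
              · intro v hv
                exact absurd hv (by simp)
          · -- split arc: b = inl v, c = inr v
            subst hpeq
            subst hqeq
            have hvJ : v ∈ J := (hJmem v).mpr ⟨hkv, hbc⟩
            obtain ⟨a, haS, hra, hE⟩ := (ih.1 v rfl).2 hkv
            have hrv : Relation.ReflTransGen R u v := hra.tail ⟨haS, Or.inl hvJ, hE⟩
            constructor
            · intro v' hv'
              exact absurd hv' (by simp)
            · intro v' hv'
              rw [Sum.inr.injEq] at hv'
              subst hv'
              exact ⟨hvJ, hrv⟩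
      exact ((main _ (hreach x hx)).1 x rfl).1 (Or.inl hx)
end

section
/- In a DQC profile, two individuals suffice to qualify everyone: Let φ be a profile over a finite set N = {a_1, …, a_n} (ordered by a linear order ▷) that is disqualifying consecutive with respect to ▷, i.e., for every a ∈ N the set {a' : φ(a, a') = 0} is an interval in ▷. Suppose every individual in N disqualifies at least one individual. Then for every subset Z ⊆ N there exists a set X ⊆ N with |X| ≤ 2 such that every individual qualified by some member of Z is also qualified by some member of X; in particular, X can be chosen independently of Z (depending only on φ). -/
open Finset

theorem dqc_two_individuals_suffice
    {α : Type*} [LinearOrder α] [Fintype α] (φ : α → α → Bool)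
    (hdqc : ∀ a x y w : α, x ≤ w → w ≤ y → φ a x = false → φ a y = false → φ a w = false)
    (hdis : ∀ a : α, ∃ a' : α, φ a a' = false) :
    ∃ X : Finset α, X.card ≤ 2 ∧
      ∀ (Z : Finset α) (b : α), (∃ z ∈ Z, φ z b = true) → ∃ x ∈ X, φ x b = true := by
  by_cases hα : Nonempty α
  · classical
    have hDne : ∀ a : α, (univ.filter (fun x => φ a x = false)).Nonempty := by
      intro a
      obtain ⟨a', ha'⟩ := hdis a
      exact ⟨a', by simp [ha']⟩
    set l : α → α := fun a => (univ.filter (fun x => φ a x = false)).min' (hDne a) with hl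
    set r : α → α := fun a => (univ.filter (fun x => φ a x = false)).max' (hDne a) with hr
    have hlf : ∀ a, φ a (l a) = false := fun a => by
      have := Finset.min'_mem _ (hDne a); simpa using this
    have hrf : ∀ a, φ a (r a) = false := fun a => by
      have := Finset.max'_mem _ (hDne a); simpa using this
    have hlle : ∀ a b, φ a b = false → l a ≤ b := fun a b hb =>
      Finset.min'_le _ _ (by simp [hb])
    have hler : ∀ a b, φ a b = false → b ≤ r a := fun a b hb =>
      Finset.le_max' _ _ (by simp [hb])
    obtain ⟨x1, _, hx1⟩ := Finset.exists_max_image (univ : Finset α) l univ_nonempty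
    obtain ⟨x2, _, hx2⟩ := Finset.exists_min_image (univ : Finset α) r univ_nonempty
    refine ⟨{x1, x2}, card_insert_le _ _ |>.trans (by simp), ?_⟩
    rintro Z b ⟨z, _, hz⟩
    by_contra hcon
    push_neg at hcon
    have h1 : φ x1 b = false := by
      have := hcon x1 (by simp); simpa using this
    have h2 : φ x2 b = false := by
      have := hcon x2 (by simp); simpa using this
    have hb1 : l x1 ≤ b := hlle _ _ h1
    have hb2 : b ≤ r x2 := hler _ _ h2
    have : φ z b = false :=
      hdqc z (l z) (r z) b (le_trans (hx1 z (by simp)) hb1)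
        (le_trans hb2 (hx2 z (by simp))) (hlf z) (hrf z)
    simp [this] at hz
  · refine ⟨∅, by simp, ?_⟩
    rintro Z b -
    exact absurd ⟨b⟩ hα
end

section
/- CSR socially qualified individuals in a profile where someone is universally qualified are exactly the vertices reachable from the universal-qualification individual: Let φ be a profile over finite N and a ∈ N with φ(b, a) = 1 for all b ∈ N. Then f^CSR(φ, N) = {a' ∈ N : there is a directed walk of length ≥ 0 from a to a' in the incidence digraph G_φ}. In particular f^CSR(φ, N) is nonempty and contains a. -/
open Finset

theorem csr_eq_reachable_from_universally_qualified
    {α : Type*} [DecidableEq α] [Fintype α] (φ : α → α → Bool) (a : α)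
    (ha : ∀ b : α, φ b a = true) :
    (∀ a' : α, a' ∈ fCSR φ (Finset.univ : Finset α) ↔
        Relation.ReflTransGen (fun x y => φ x y = true) a a') ∧
    (fCSR φ (Finset.univ : Finset α)).Nonempty ∧
    a ∈ fCSR φ (Finset.univ : Finset α) := by
  classical
  have hsub : ∀ n, csrIter φ (univ : Finset α) n ⊆ csrIter φ univ (n+1) := by
    intro n; exact Finset.subset_union_left
  have hmono : ∀ m n, m ≤ n → csrIter φ (univ : Finset α) m ⊆ csrIter φ univ n := by
    intro m n h
    induction h with
    | refl => exact Finset.Subset.refl _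
    | step _ ih => exact ih.trans (hsub _)
  have ha0 : a ∈ csrIter φ (univ : Finset α) 0 := by
    simp [csrIter, ha]
  -- stabilization
  have hstab : ∀ n, csrIter φ (univ : Finset α) n = csrIter φ univ (n+1) ∨
      n + 1 ≤ (csrIter φ (univ : Finset α) n).card := by
    intro n
    induction n with
    | zero => exact Or.inr (Finset.card_pos.2 ⟨a, ha0⟩)
    | succ n ih =>
      by_cases he : csrIter φ (univ : Finset α) n = csrIter φ univ (n+1)
      · left
        show csrStep φ univ (csrIter φ univ n) = csrStep φ univ (csrIter φ univ (n+1))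
        rw [he]
      · right
        rcases ih with h | h
        · exact absurd h he
        · have hlt : (csrIter φ (univ : Finset α) n).card <
              (csrIter φ (univ : Finset α) (n+1)).card :=
            Finset.card_lt_card (Finset.ssubset_iff_subset_ne.2 ⟨hsub n, he⟩)
          omega
  have hcard : (univ : Finset α).card = Fintype.card α := Finset.card_univ
  have hfix : fCSR φ (univ : Finset α) = csrStep φ univ (fCSR φ univ) := by
    rcases hstab (Fintype.card α) with h | h
    · unfold fCSR
      rw [hcard]
      rw [show csrStep φ univ (csrIter φ univ (Fintype.card α)) =
          csrIter φ univ (Fintype.card α + 1) from rfl]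
      exact h
    · exfalso
      have := Finset.card_le_univ (csrIter φ (univ : Finset α) (Fintype.card α))
      omega
  have hclosed : ∀ x y, x ∈ fCSR φ (univ : Finset α) → φ x y = true →
      y ∈ fCSR φ (univ : Finset α) := by
    intro x y hx hxy
    rw [hfix]
    exact Finset.mem_union_right _ (Finset.mem_filter.2 ⟨Finset.mem_univ y, ⟨x, hx, hxy⟩⟩)
  have hback : ∀ a', Relation.ReflTransGen (fun x y => φ x y = true) a a' →
      a' ∈ fCSR φ (univ : Finset α) := by
    intro a' h
    induction h with
    | refl => exact hmono 0 _ (Nat.zero_le _) ha0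
    | tail _ hstep ih => exact hclosed _ _ ih hstep
  have hfwd : ∀ n, ∀ x ∈ csrIter φ (univ : Finset α) n,
      Relation.ReflTransGen (fun x y => φ x y = true) a x := by
    intro n
    induction n with
    | zero =>
      intro x hx
      simp only [csrIter, Finset.mem_filter] at hx
      exact Relation.ReflTransGen.single (hx.2 a (Finset.mem_univ a))
    | succ n ih =>
      intro x hx
      rcases Finset.mem_union.1 hx with h | h
      · exact ih x h
      · obtain ⟨-, y, hy, hyx⟩ := Finset.mem_filter.1 h
        exact (ih y hy).tail hyx
  refine ⟨fun a' => ⟨hfwd _ a', hback a'⟩, ⟨a, hback a .refl⟩, hback a .refl⟩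
end
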